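/- Moyal identity: for ψ, φ, ψ', φ' in the Schwartz space on ℝⁿ, the cross-Wigner transforms satisfy ⟨W(ψ,φ), W(ψ',φ')⟩_{L²(ℝ²ⁿ)} = (2πħ)^{-n} ⟨ψ, ψ'⟩_{L²} · conj(⟨φ, φ'⟩_{L²}). In particular ‖Wψ‖_{L²(ℝ²ⁿ)} = (2πħ)^{-n/2} ‖ψ‖²_{L²(ℝⁿ)}. -/

import Mathlib

open Matrix MeasureTheory SchwartzMap
open scoped Real

/-- The cross-Wigner transform
W(ψ,φ)(x,p) = (2πħ)⁻ⁿ ∫ e^{-i p·y/ħ} ψ(x + y/2) conj(φ(x - y/2)) dy. -/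
noncomputable def Wig (n : ℕ) (hb : ℝ) (ψ φ : (Fin n → ℝ) → ℂ)
    (x p : Fin n → ℝ) : ℂ :=
  ((2 * Real.pi * hb : ℂ) ^ n)⁻¹ *
    ∫ y : Fin n → ℝ,
      Complex.exp (-(Complex.I * ((p ⬝ᵥ y : ℝ) : ℂ)) / (hb : ℂ)) *
        ψ (x + (2 : ℝ)⁻¹ • y) * (starRingEnd ℂ) (φ (x - (2 : ℝ)⁻¹ • y))

open FourierTransform Complex ContinuousLinearMap
open scoped RealInnerProductSpace Convolution

section aux

variable {E F : Type*} [NormedAddCommGroup E] [NormedSpace ℝ E]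
  [NormedAddCommGroup F] [NormedSpace ℝ F]

lemma SchwartzMap.hasTemperateGrowth' (f : 𝓢(E, F)) : Function.HasTemperateGrowth ⇑f :=
  ⟨f.smooth', fun N => ⟨0, SchwartzMap.seminorm ℝ 0 N f, fun x => by
    simpa using SchwartzMap.le_seminorm ℝ 0 N f x⟩⟩

lemma affine_hasTemperateGrowth (x0 : E) (c : ℝ) :
    Function.HasTemperateGrowth (fun y : E => x0 + c • y) := by
  have hderiv : ∀ y : E, HasFDerivAt (fun y : E => x0 + c • y)
      (c • ContinuousLinearMap.id ℝ E) y := fun y =>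
    ((hasFDerivAt_id y).const_smul c).const_add x0
  apply Function.HasTemperateGrowth.of_fderiv (k := 1) (C := ‖x0‖ + |c|)
  · have : (fderiv ℝ fun y : E => x0 + c • y) = fun _ => c • ContinuousLinearMap.id ℝ E := by
      funext y; exact (hderiv y).fderiv
    rw [this]
    exact .const _
  · exact fun y => (hderiv y).differentiableAt
  · intro y
    have h1 : ‖x0 + c • y‖ ≤ ‖x0‖ + |c| * ‖y‖ := by
      refine (norm_add_le _ _).trans ?_
      rw [norm_smul, Real.norm_eq_abs]
    have h2 : (0:ℝ) ≤ ‖y‖ := norm_nonneg _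
    have h3 : (0:ℝ) ≤ |c| := abs_nonneg _
    have h4 : (0:ℝ) ≤ ‖x0‖ := norm_nonneg _
    nlinarith

/-- Composition of a Schwartz function with `y ↦ x0 + c • y`, `c ≠ 0`. -/
noncomputable def shComp (x0 : E) (c : ℝ) (hc : c ≠ 0) : 𝓢(E, ℂ) →L[ℝ] 𝓢(E, ℂ) :=
  SchwartzMap.compCLM ℝ (affine_hasTemperateGrowth x0 c)
    ⟨1, |c|⁻¹ * (1 + ‖x0‖), by
      intro y
      have h0 : (0:ℝ) < |c| := abs_pos.2 hc
      have h1 : ‖y‖ = |c|⁻¹ * ‖(x0 + c • y) - x0‖ := by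
        rw [add_sub_cancel_left, norm_smul, Real.norm_eq_abs, ← mul_assoc,
          inv_mul_cancel₀ h0.ne', one_mul]
      have h2 : ‖(x0 + c • y) - x0‖ ≤ ‖x0 + c • y‖ + ‖x0‖ := norm_sub_le _ _
      have h3 : (0:ℝ) ≤ ‖x0 + c • y‖ := norm_nonneg _
      have h4 : (0:ℝ) ≤ ‖x0‖ := norm_nonneg _
      have h5 : (0:ℝ) ≤ |c|⁻¹ := inv_nonneg.2 h0.le
      rw [h1, pow_one]
      calc |c|⁻¹ * ‖x0 + c • y - x0‖ ≤ |c|⁻¹ * (‖x0 + c • y‖ + ‖x0‖) := by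
            exact mul_le_mul_of_nonneg_left h2 h5
        _ ≤ |c|⁻¹ * (1 + ‖x0‖) * (1 + ‖x0 + c • y‖) := by
            rw [mul_assoc]
            refine mul_le_mul_of_nonneg_left ?_ h5
            nlinarith⟩

@[simp] lemma shComp_apply (x0 : E) (c : ℝ) (hc : c ≠ 0) (f : 𝓢(E, ℂ)) (y : E) :
    shComp x0 c hc f y = f (x0 + c • y) := rfl

/-- The real-bilinear map `(a, b) ↦ a * conj b` on `ℂ`. -/
noncomputable def mulConjCLM : ℂ →L[ℝ] ℂ →L[ℝ] ℂ :=
  ((ContinuousLinearMap.mul ℝ ℂ).flip.comp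
    (Complex.conjCLE.toContinuousLinearEquiv.toContinuousLinearMap)).flip

@[simp] lemma mulConjCLM_apply (a b : ℂ) : mulConjCLM a b = a * (starRingEnd ℂ) b := rfl

/-- Pointwise `f * conj g` of two Schwartz functions, as a Schwartz function. -/
noncomputable def mulConjS (f g : 𝓢(E, ℂ)) : 𝓢(E, ℂ) :=
  SchwartzMap.bilinLeftCLM mulConjCLM g.hasTemperateGrowth' f

@[simp] lemma mulConjS_apply (f g : 𝓢(E, ℂ)) (x : E) :
    mulConjS f g x = f x * (starRingEnd ℂ) (g x) := rfl

end aux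

section planch

variable {V : Type*} [NormedAddCommGroup V] [InnerProductSpace ℝ V]
  [FiniteDimensional ℝ V] [MeasurableSpace V] [BorelSpace V]

lemma fourier_conj (h : V → ℂ) (w : V) :
    𝓕 (fun v => (starRingEnd ℂ) (h v)) w = (starRingEnd ℂ) (𝓕⁻ h w) := by
  rw [Real.fourier_eq', Real.fourierInv_eq', ← integral_conj]
  congr 1
  funext v
  rw [smul_eq_mul, smul_eq_mul, RingHom.map_mul, ← Complex.exp_conj]
  congr 2
  simp only [_root_.map_mul, Complex.conj_I, Complex.conj_ofReal]
  push_cast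
  ring

lemma innerl_flip_eq : (innerₗ V).flip = innerₗ V := by
  apply LinearMap.ext; intro x; apply LinearMap.ext; intro y
  exact real_inner_comm x y

/-- Plancherel / Parseval for Schwartz functions. -/
lemma planch (f g : 𝓢(V, ℂ)) :
    (∫ ξ, 𝓕 ⇑f ξ * (starRingEnd ℂ) (𝓕 ⇑g ξ)) = ∫ x, f x * (starRingEnd ℂ) (g x) := by
  have hf : Integrable ⇑f := f.integrable
  have hg : Integrable ⇑g := g.integrable
  have hFg : Integrable (𝓕 ⇑g) := by
    have := (fourierTransformCLM ℝ g).integrable (μ := volume)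
    rwa [fourierTransformCLM_apply] at this
  have hcFg : Integrable (fun ξ => (starRingEnd ℂ) (𝓕 ⇑g ξ)) :=
    (Complex.conjCLE.toContinuousLinearEquiv.toContinuousLinearMap).integrable_comp hFg
  have key := VectorFourier.integral_fourierIntegral_smul_eq_flip (L := innerₗ V)
    Real.continuous_fourierChar continuous_inner hf hcFg
  rw [innerl_flip_eq] at key
  simp only [smul_eq_mul] at key
  rw [show (fun ξ => 𝓕 ⇑f ξ * (starRingEnd ℂ) (𝓕 ⇑g ξ)) =
    (fun ξ => (VectorFourier.fourierIntegral Real.fourierChar volume (innerₗ V) ⇑f ξ) *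
      (starRingEnd ℂ) (𝓕 ⇑g ξ)) from rfl, key]
  congr 1
  funext x
  have : VectorFourier.fourierIntegral Real.fourierChar volume (innerₗ V)
      (fun ξ => (starRingEnd ℂ) (𝓕 ⇑g ξ)) x = 𝓕 (fun ξ => (starRingEnd ℂ) (𝓕 ⇑g ξ)) x := rfl
  rw [this, fourier_conj, g.continuous.fourierInv_fourier_eq hg hFg]

end planch

section wig

/-- The Schwartz function `v ↦ ψ(x + v/2) conj (φ(x - v/2))` on Euclidean space. -/
noncomputable def FS (n : ℕ) (ψ φ : 𝓢((Fin n → ℝ), ℂ)) (x : Fin n → ℝ) :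
    𝓢(EuclideanSpace ℝ (Fin n), ℂ) :=
  SchwartzMap.compCLMOfContinuousLinearEquiv ℝ (EuclideanSpace.equiv (Fin n) ℝ)
    (mulConjS (shComp x (2:ℝ)⁻¹ (by norm_num) ψ) (shComp x (-(2:ℝ)⁻¹) (by norm_num) φ))

lemma FS_apply (n : ℕ) (ψ φ : 𝓢((Fin n → ℝ), ℂ)) (x : Fin n → ℝ)
    (v : EuclideanSpace ℝ (Fin n)) :
    FS n ψ φ x v = ψ (x + (2:ℝ)⁻¹ • (EuclideanSpace.equiv (Fin n) ℝ v)) *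
      (starRingEnd ℂ) (φ (x - (2:ℝ)⁻¹ • (EuclideanSpace.equiv (Fin n) ℝ v))) := by
  have h : ⇑(FS n ψ φ x) = ⇑(mulConjS (shComp x (2:ℝ)⁻¹ (by norm_num) ψ)
      (shComp x (-(2:ℝ)⁻¹) (by norm_num) φ)) ∘ ⇑(EuclideanSpace.equiv (Fin n) ℝ) :=
    SchwartzMap.compCLMOfContinuousLinearEquiv_apply ℝ _ _
  rw [h, Function.comp_apply, mulConjS_apply, shComp_apply, shComp_apply, neg_smul,
    ← sub_eq_add_neg]

lemma wig_eq (n : ℕ) {hb : ℝ} (hhb : 0 < hb) (ψ φ : 𝓢((Fin n → ℝ), ℂ)) (x p : Fin n → ℝ) :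
    Wig n hb ⇑ψ ⇑φ x p = ((2 * Real.pi * hb : ℂ) ^ n)⁻¹ *
      𝓕 (⇑(FS n ψ φ x)) ((2 * Real.pi * hb)⁻¹ • ((WithLp.equiv 2 (Fin n → ℝ)).symm p)) := by
  rw [Wig]
  congr 1
  rw [Real.fourier_eq',
    ← MeasurePreserving.integral_comp' (EuclideanSpace.volume_preserving_symm_measurableEquiv_toLp (Fin n))]
  congr 1
  funext v
  rw [smul_eq_mul, FS_apply]
  have hv : EuclideanSpace.equiv (Fin n) ℝ v = (MeasurableEquiv.toLp 2 (Fin n → ℝ)).symm v := rfl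
  rw [← hv, mul_assoc]
  congr 1
  · congr 1
    have hinner : (inner ℝ v ((2 * Real.pi * hb)⁻¹ • ((WithLp.equiv 2 (Fin n → ℝ)).symm p)) : ℝ) =
        (2 * Real.pi * hb)⁻¹ * (p ⬝ᵥ (EuclideanSpace.equiv (Fin n) ℝ v)) := by
      rw [real_inner_smul_right]
      congr 1
    rw [hinner, hv]
    push_cast
    have hπ : (Real.pi : ℂ) ≠ 0 := Complex.ofReal_ne_zero.2 Real.pi_ne_zero
    have hb0 : (hb : ℂ) ≠ 0 := Complex.ofReal_ne_zero.2 hhb.ne'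
    field_simp

end wig
section inner_int

lemma two_pi_hb_ne {hb : ℝ} (hhb : 0 < hb) : ((2 * Real.pi * hb : ℂ)) ≠ 0 := by
  rw [show ((2 * Real.pi * hb : ℂ)) = ((2 * Real.pi * hb : ℝ) : ℂ) by push_cast; ring]
  exact Complex.ofReal_ne_zero.2 (by positivity)

lemma inner_int (n : ℕ) {hb : ℝ} (hhb : 0 < hb) (ψ φ ψ' φ' : 𝓢((Fin n → ℝ), ℂ))
    (x : Fin n → ℝ) :
    (∫ p : Fin n → ℝ, Wig n hb ⇑ψ ⇑φ x p * (starRingEnd ℂ) (Wig n hb ⇑ψ' ⇑φ' x p)) =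
      ((2 * Real.pi * hb : ℂ) ^ n)⁻¹ *
        ∫ y : Fin n → ℝ, (mulConjS ψ ψ') (x + (2:ℝ)⁻¹ • y) *
          (mulConjS φ' φ) (x - (2:ℝ)⁻¹ • y) := by
  have hc : (0:ℝ) < 2 * Real.pi * hb := by positivity
  have hX : ((2 * Real.pi * hb : ℂ)) ^ n ≠ 0 := pow_ne_zero _ (two_pi_hb_ne hhb)
  set F := FS n ψ φ x with hF
  set G := FS n ψ' φ' x with hG
  set C : ℂ := ((2 * Real.pi * hb : ℂ) ^ n)⁻¹ with hC
  have hconjC : (starRingEnd ℂ) C = C := by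
    rw [hC, show ((2 * Real.pi * hb : ℂ)) = ((2 * Real.pi * hb : ℝ) : ℂ) by push_cast; ring,
      ← Complex.ofReal_pow, ← Complex.ofReal_inv, Complex.conj_ofReal]
  have step1 : (∫ p : Fin n → ℝ, Wig n hb ⇑ψ ⇑φ x p * (starRingEnd ℂ) (Wig n hb ⇑ψ' ⇑φ' x p))
      = C * C * ∫ p : Fin n → ℝ,
          𝓕 ⇑F ((2 * Real.pi * hb)⁻¹ • ((WithLp.equiv 2 (Fin n → ℝ)).symm p)) *
          (starRingEnd ℂ) (𝓕 ⇑G ((2 * Real.pi * hb)⁻¹ •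
            ((WithLp.equiv 2 (Fin n → ℝ)).symm p))) := by
    simp_rw [wig_eq n hhb, _root_.map_mul, ← hC, hconjC, ← hF, ← hG, mul_mul_mul_comm]
    rw [integral_const_mul]
  rw [step1]
  have step2 : (∫ p : Fin n → ℝ,
        𝓕 ⇑F ((2 * Real.pi * hb)⁻¹ • ((WithLp.equiv 2 (Fin n → ℝ)).symm p)) *
          (starRingEnd ℂ) (𝓕 ⇑G ((2 * Real.pi * hb)⁻¹ •
            ((WithLp.equiv 2 (Fin n → ℝ)).symm p))))
      = ∫ q : EuclideanSpace ℝ (Fin n),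
          𝓕 ⇑F ((2 * Real.pi * hb)⁻¹ • q) *
            (starRingEnd ℂ) (𝓕 ⇑G ((2 * Real.pi * hb)⁻¹ • q)) :=
    ((EuclideanSpace.volume_preserving_symm_measurableEquiv_toLp (Fin n)).symm).integral_comp'
      (fun q => 𝓕 ⇑F ((2 * Real.pi * hb)⁻¹ • q) *
        (starRingEnd ℂ) (𝓕 ⇑G ((2 * Real.pi * hb)⁻¹ • q)))
  rw [step2]
  have step3 : (∫ q : EuclideanSpace ℝ (Fin n),
        𝓕 ⇑F ((2 * Real.pi * hb)⁻¹ • q) *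
          (starRingEnd ℂ) (𝓕 ⇑G ((2 * Real.pi * hb)⁻¹ • q)))
      = ((2 * Real.pi * hb) ^ n : ℝ) •
          ∫ q : EuclideanSpace ℝ (Fin n), 𝓕 ⇑F q * (starRingEnd ℂ) (𝓕 ⇑G q) := by
    have := Measure.integral_comp_inv_smul_of_nonneg (volume : Measure (EuclideanSpace ℝ (Fin n)))
      (fun q => 𝓕 ⇑F q * (starRingEnd ℂ) (𝓕 ⇑G q)) hc.le
    rwa [finrank_euclideanSpace_fin] at this
  rw [step3, planch F G]
  have step5 : (∫ v : EuclideanSpace ℝ (Fin n), F v * (starRingEnd ℂ) (G v))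
      = ∫ y : Fin n → ℝ, (mulConjS ψ ψ') (x + (2:ℝ)⁻¹ • y) *
          (mulConjS φ' φ) (x - (2:ℝ)⁻¹ • y) := by
    rw [← (EuclideanSpace.volume_preserving_symm_measurableEquiv_toLp (Fin n)).integral_comp'
      (fun y : Fin n → ℝ => (mulConjS ψ ψ') (x + (2:ℝ)⁻¹ • y) *
        (mulConjS φ' φ) (x - (2:ℝ)⁻¹ • y))]
    congr 1
    funext v
    rw [hF, hG, FS_apply, FS_apply, mulConjS_apply, mulConjS_apply]
    have hv : EuclideanSpace.equiv (Fin n) ℝ v = (MeasurableEquiv.toLp 2 (Fin n → ℝ)).symm v := rfl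
    rw [hv]
    simp only [_root_.map_mul, Complex.conj_conj]
    ring
  rw [step5, Complex.real_smul]
  have hcast : (((2 * Real.pi * hb) ^ n : ℝ) : ℂ) = (2 * Real.pi * hb : ℂ) ^ n := by
    push_cast; ring
  rw [hcast]
  generalize (∫ y : Fin n → ℝ, (mulConjS ψ ψ') (x + (2:ℝ)⁻¹ • y) *
    (mulConjS φ' φ) (x - (2:ℝ)⁻¹ • y)) = T
  calc C * C * ((2 * Real.pi * hb : ℂ) ^ n * T)
      = C * (C * (2 * Real.pi * hb : ℂ) ^ n * T) := by ring
    _ = C * T := by rw [hC, inv_mul_cancel₀ hX, one_mul]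

end inner_int
section main

lemma moyal1 (n : ℕ) {hb : ℝ} (hhb : 0 < hb) (ψ φ ψ' φ' : 𝓢((Fin n → ℝ), ℂ)) :
    (∫ x : Fin n → ℝ, ∫ p : Fin n → ℝ,
        Wig n hb (⇑ψ) (⇑φ) x p * (starRingEnd ℂ) (Wig n hb (⇑ψ') (⇑φ') x p)) =
      ((2 * Real.pi * hb : ℂ) ^ n)⁻¹ *
        (∫ x : Fin n → ℝ, ψ x * (starRingEnd ℂ) (ψ' x)) *
        (starRingEnd ℂ) (∫ x : Fin n → ℝ, φ x * (starRingEnd ℂ) (φ' x)) := by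
  have hfin : Module.finrank ℝ (Fin n → ℝ) = n := Module.finrank_fin_fun ℝ
  have hconv : ∀ x : Fin n → ℝ,
      (∫ y : Fin n → ℝ, (mulConjS ψ ψ') (x + (2:ℝ)⁻¹ • y) *
          (mulConjS φ' φ) (x - (2:ℝ)⁻¹ • y))
        = ((2:ℝ)^n) • (MeasureTheory.convolution ⇑(mulConjS ψ ψ') ⇑(mulConjS φ' φ)
            (ContinuousLinearMap.mul ℝ ℂ) volume) ((2:ℝ) • x) := by
    intro x
    have e1 := Measure.integral_comp_smul_of_nonneg (volume : Measure (Fin n → ℝ))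
      (fun u => (mulConjS ψ ψ') (x + u) * (mulConjS φ' φ) (x - u)) ((2:ℝ)⁻¹)
      (hR := by norm_num)
    rw [hfin] at e1
    have e2 : (∫ y : Fin n → ℝ, (mulConjS ψ ψ') (x + (2:ℝ)⁻¹ • y) *
          (mulConjS φ' φ) (x - (2:ℝ)⁻¹ • y))
        = ∫ y : Fin n → ℝ, (fun u => (mulConjS ψ ψ') (x + u) * (mulConjS φ' φ) (x - u))
            ((2:ℝ)⁻¹ • y) := rfl
    rw [e2, e1]
    have e3 : (∫ u : Fin n → ℝ, (mulConjS ψ ψ') (x + u) * (mulConjS φ' φ) (x - u))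
        = ∫ t : Fin n → ℝ, (mulConjS ψ ψ') t * (mulConjS φ' φ) ((2:ℝ) • x - t) := by
      rw [← integral_add_left_eq_self
        (fun u => (mulConjS ψ ψ') (x + u) * (mulConjS φ' φ) (x - u)) (-x)]
      congr 1
      funext t
      have h1 : x + (-x + t) = t := by abel
      have h2 : x - (-x + t) = (2:ℝ) • x - t := by rw [two_smul]; abel
      simp only [h1, h2]
    rw [e3]
    have e4 : (MeasureTheory.convolution ⇑(mulConjS ψ ψ') ⇑(mulConjS φ' φ)
          (ContinuousLinearMap.mul ℝ ℂ) volume) ((2:ℝ) • x)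
        = ∫ t : Fin n → ℝ, (mulConjS ψ ψ') t * (mulConjS φ' φ) ((2:ℝ) • x - t) := rfl
    rw [e4]
    congr 1
    rw [inv_pow, inv_inv]
  have e5 := Measure.integral_comp_smul_of_nonneg (volume : Measure (Fin n → ℝ))
    (MeasureTheory.convolution ⇑(mulConjS ψ ψ') ⇑(mulConjS φ' φ)
      (ContinuousLinearMap.mul ℝ ℂ) volume) (2:ℝ) (hR := by norm_num)
  rw [hfin] at e5
  calc (∫ x : Fin n → ℝ, ∫ p : Fin n → ℝ,
        Wig n hb (⇑ψ) (⇑φ) x p * (starRingEnd ℂ) (Wig n hb (⇑ψ') (⇑φ') x p))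
      = ∫ x : Fin n → ℝ, ((2 * Real.pi * hb : ℂ) ^ n)⁻¹ *
          (((2:ℝ)^n) • (MeasureTheory.convolution ⇑(mulConjS ψ ψ') ⇑(mulConjS φ' φ)
            (ContinuousLinearMap.mul ℝ ℂ) volume) ((2:ℝ) • x)) := by
        congr 1
        funext x
        rw [inner_int n hhb ψ φ ψ' φ' x, hconv x]
    _ = ((2 * Real.pi * hb : ℂ) ^ n)⁻¹ * (((2:ℝ)^n) •
          ∫ x : Fin n → ℝ, (MeasureTheory.convolution ⇑(mulConjS ψ ψ') ⇑(mulConjS φ' φ)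
            (ContinuousLinearMap.mul ℝ ℂ) volume) ((2:ℝ) • x)) := by
        rw [integral_const_mul, integral_smul]
    _ = ((2 * Real.pi * hb : ℂ) ^ n)⁻¹ * (((2:ℝ)^n) • ((((2:ℝ)^n)⁻¹ •
          ∫ z : Fin n → ℝ, (MeasureTheory.convolution ⇑(mulConjS ψ ψ') ⇑(mulConjS φ' φ)
            (ContinuousLinearMap.mul ℝ ℂ) volume) z))) := by rw [e5]
    _ = ((2 * Real.pi * hb : ℂ) ^ n)⁻¹ *
          ∫ z : Fin n → ℝ, (MeasureTheory.convolution ⇑(mulConjS ψ ψ') ⇑(mulConjS φ' φ)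
            (ContinuousLinearMap.mul ℝ ℂ) volume) z := by
        rw [smul_smul, mul_inv_cancel₀ (by positivity), one_smul]
    _ = ((2 * Real.pi * hb : ℂ) ^ n)⁻¹ *
          ((∫ x : Fin n → ℝ, (mulConjS ψ ψ') x) * (∫ x : Fin n → ℝ, (mulConjS φ' φ) x)) := by
        rw [MeasureTheory.integral_convolution (L := ContinuousLinearMap.mul ℝ ℂ)
          (hf := (mulConjS ψ ψ').integrable) (hg := (mulConjS φ' φ).integrable)]
        rfl
    _ = ((2 * Real.pi * hb : ℂ) ^ n)⁻¹ *
        (∫ x : Fin n → ℝ, ψ x * (starRingEnd ℂ) (ψ' x)) *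
        (starRingEnd ℂ) (∫ x : Fin n → ℝ, φ x * (starRingEnd ℂ) (φ' x)) := by
        have hI1 : (∫ x : Fin n → ℝ, (mulConjS ψ ψ') x)
            = ∫ x : Fin n → ℝ, ψ x * (starRingEnd ℂ) (ψ' x) := rfl
        have hI2 : (∫ x : Fin n → ℝ, (mulConjS φ' φ) x)
            = (starRingEnd ℂ) (∫ x : Fin n → ℝ, φ x * (starRingEnd ℂ) (φ' x)) := by
          rw [← integral_conj]
          congr 1
          funext x
          rw [mulConjS_apply, _root_.map_mul, Complex.conj_conj, mul_comm]
        rw [hI1, hI2, mul_assoc]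
        try ring

end main

/-- Moyal identity
⟨W(ψ,φ), W(ψ',φ')⟩_{L²(ℝ²ⁿ)} = (2πħ)⁻ⁿ ⟨ψ,ψ'⟩ conj ⟨φ,φ'⟩, and in particular
‖Wψ‖²_{L²} = (2πħ)⁻ⁿ ‖ψ‖⁴. -/
theorem moyal_identity (n : ℕ) (hb : ℝ) (hhb : 0 < hb)
    (ψ φ ψ' φ' : 𝓢((Fin n → ℝ), ℂ)) :
    (∫ x : Fin n → ℝ, ∫ p : Fin n → ℝ,
        Wig n hb (⇑ψ) (⇑φ) x p * (starRingEnd ℂ) (Wig n hb (⇑ψ') (⇑φ') x p)) =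
      ((2 * Real.pi * hb : ℂ) ^ n)⁻¹ *
        (∫ x : Fin n → ℝ, ψ x * (starRingEnd ℂ) (ψ' x)) *
        (starRingEnd ℂ) (∫ x : Fin n → ℝ, φ x * (starRingEnd ℂ) (φ' x)) ∧
    (∫ x : Fin n → ℝ, ∫ p : Fin n → ℝ, ‖Wig n hb (⇑ψ) (⇑ψ) x p‖ ^ 2) =
      ((2 * Real.pi * hb) ^ n)⁻¹ * (∫ x : Fin n → ℝ, ‖ψ x‖ ^ 2) ^ 2 := by
  refine ⟨moyal1 n hhb ψ φ ψ' φ', ?_⟩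
  have key := moyal1 n hhb ψ ψ ψ ψ
  have hnorm : ∀ z : ℂ, z * (starRingEnd ℂ) z = ((‖z‖ ^ 2 : ℝ) : ℂ) := fun z => by
    rw [Complex.mul_conj]
    norm_cast
    rw [Complex.sq_norm]
  have hr : (∫ x : Fin n → ℝ, ψ x * (starRingEnd ℂ) (ψ x))
      = ((∫ x : Fin n → ℝ, ‖ψ x‖ ^ 2 : ℝ) : ℂ) := by
    simp_rw [hnorm]
    exact integral_ofReal
  have inner_eq : ∀ x : Fin n → ℝ,
      (∫ p : Fin n → ℝ, Wig n hb (⇑ψ) (⇑ψ) x p * (starRingEnd ℂ) (Wig n hb (⇑ψ) (⇑ψ) x p))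
        = ((∫ p : Fin n → ℝ, ‖Wig n hb (⇑ψ) (⇑ψ) x p‖ ^ 2 : ℝ) : ℂ) := by
    intro x
    simp_rw [hnorm]
    exact integral_ofReal
  have hLHS : (∫ x : Fin n → ℝ, ∫ p : Fin n → ℝ,
          Wig n hb (⇑ψ) (⇑ψ) x p * (starRingEnd ℂ) (Wig n hb (⇑ψ) (⇑ψ) x p))
      = ((∫ x : Fin n → ℝ, ∫ p : Fin n → ℝ, ‖Wig n hb (⇑ψ) (⇑ψ) x p‖ ^ 2 : ℝ) : ℂ) := by
    simp_rw [inner_eq]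
    exact integral_ofReal
  apply Complex.ofReal_injective
  rw [← hLHS, key, hr, Complex.conj_ofReal]
  push_cast
  ring
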